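/- The function ψ(l,t) = exp(i l y₀ e^{g₂ t/ε} - i l ε^γ (g₁/g₂)(1 - e^{g₂ t/ε}) - (b^α |l|^α / (ε^{(1-γ)α-1}(-α g₂))) Ξ(l)(1 - e^{α g₂ t/ε})) satisfies the PDE ∂ψ/∂t = (g₂ l/ε) ∂ψ/∂l + (i g₁ l ε^{γ-1} - b^α |l|^α ε^{-(1-γ)α} Ξ(l)) ψ with initial condition ψ(l,0) = exp(i l y₀), for all l ≠ 0. -/

import Mathlib

open Complex Real

/-- Auxiliary pure field identity used to verify the PDE. -/
lemma alg_aux {K : Type*} [Field K] (P i l y g2 e a g1 u v w c X E F : K)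
    (he : e ≠ 0) (hg : g2 ≠ 0) (ha : a ≠ 0) :
    P * (i * l * y * (E * (g2 * 1 / e))
        - i * l * (u * e * (g1 / g2)) * -(E * (g2 * 1 / e))
        - c * (w * (l * l)) / (v * (-a * g2)) * X * -(F * (a * g2 * 1 / e)))
      = g2 * l / e * (P * (i * 1 * y * E
            - i * 1 * (u * e * (g1 / g2)) * (1 - E)
            - c * (a * w * l) / (v * (-a * g2)) * X * (1 - F)))
        + (i * (g1 * l * u) - c * (w * (l * l)) * (v * e)⁻¹ * X) * P := by
  have he' : e * e⁻¹ = 1 := mul_inv_cancel₀ he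
  have hg' : g2 * g2⁻¹ = 1 := mul_inv_cancel₀ hg
  have ha' : a * a⁻¹ = 1 := mul_inv_cancel₀ ha
  linear_combination (P * (i * l * u * g1 * (g2 * g2⁻¹))) * he'
    + (P * (i * l * u * g1 - c * w * (l * l) * X * v⁻¹ * e⁻¹)) * hg'
    - (P * (c * w * (l * l) * X * v⁻¹ * e⁻¹ * (g2 * g2⁻¹))) * ha'

/-- The α-stable skewness factor Ξ(l;α,β) = 1 + iβ·sgn(l)·tan(πα/2). -/
noncomputable def Xi (α β l : ℝ) : ℂ :=
  1 + Complex.I * (β : ℂ) * (Real.sign l : ℂ) * (Real.tan (Real.pi * α / 2) : ℂ)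

/-- The explicit solution of the Fourier-transformed forward Kolmogorov equation
for the linear Lévy-driven Ornstein–Uhlenbeck process. -/
noncomputable def psi (g₁ g₂ b y₀ ε γ α β : ℝ) (l t : ℝ) : ℂ :=
  Complex.exp (Complex.I * (l : ℂ) * (y₀ : ℂ) * (Real.exp (g₂ * t / ε) : ℂ)
    - Complex.I * (l : ℂ) * ((ε ^ γ * (g₁ / g₂) : ℝ) : ℂ)
        * (1 - (Real.exp (g₂ * t / ε) : ℂ))
    - ((b ^ α * |l| ^ α / (ε ^ ((1 - γ) * α - 1) * (-α * g₂)) : ℝ) : ℂ)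
        * Xi α β l * (1 - (Real.exp (α * g₂ * t / ε) : ℂ)))

/-- The function ψ satisfies ∂ψ/∂t = (g₂ l/ε) ∂ψ/∂l
+ (i g₁ l ε^{γ-1} - b^α |l|^α ε^{-(1-γ)α} Ξ(l)) ψ with ψ(l,0) = exp(i l y₀),
for all l ≠ 0. -/
theorem stmt_2 (g₁ g₂ b y₀ ε γ α β : ℝ) (hg₂ : g₂ < 0) (hε : 0 < ε)
    (hα : α ∈ Set.Ioc (1 : ℝ) 2) (hβ : β ∈ Set.Icc (-1 : ℝ) 1) :
    (∀ l : ℝ, l ≠ 0 → ∀ t : ℝ,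
      deriv (fun s => psi g₁ g₂ b y₀ ε γ α β l s) t
        = ((g₂ * l / ε : ℝ) : ℂ) * deriv (fun l' => psi g₁ g₂ b y₀ ε γ α β l' t) l
          + (Complex.I * ((g₁ * l * ε ^ (γ - 1) : ℝ) : ℂ)
              - ((b ^ α * |l| ^ α * ε ^ (-(1 - γ) * α) : ℝ) : ℂ) * Xi α β l)
            * psi g₁ g₂ b y₀ ε γ α β l t)
    ∧ ∀ l : ℝ, psi g₁ g₂ b y₀ ε γ α β l 0 = Complex.exp (Complex.I * l * y₀) := by
  have hεne : ε ≠ 0 := ne_of_gt hε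
  have hg₂ne : g₂ ≠ 0 := ne_of_lt hg₂
  have hα1 : (1:ℝ) < α := hα.1
  have hαne : α ≠ 0 := by linarith
  constructor
  · intro l hl t
    have hlabs : (0:ℝ) < |l| := abs_pos.2 hl
    set Ξ : ℂ := Xi α β l with hΞ
    -- t-derivative
    have hEt : HasDerivAt (fun s : ℝ => ((Real.exp (g₂ * s / ε) : ℝ) : ℂ))
        ((Real.exp (g₂ * t / ε) * (g₂ * 1 / ε) : ℝ) : ℂ) t :=
      ((((hasDerivAt_id t).const_mul g₂).div_const ε).exp).ofReal_comp
    have hEαt : HasDerivAt (fun s : ℝ => ((Real.exp (α * g₂ * s / ε) : ℝ) : ℂ))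
        ((Real.exp (α * g₂ * t / ε) * (α * g₂ * 1 / ε) : ℝ) : ℂ) t :=
      ((((hasDerivAt_id t).const_mul (α * g₂)).div_const ε).exp).ofReal_comp
    have hψt := (((hEt.const_mul (Complex.I * (l : ℂ) * (y₀ : ℂ))).sub
        ((hEt.const_sub 1).const_mul (Complex.I * (l : ℂ) * ((ε ^ γ * (g₁ / g₂) : ℝ) : ℂ)))).sub
        ((hEαt.const_sub 1).const_mul
          (((b ^ α * |l| ^ α / (ε ^ ((1 - γ) * α - 1) * (-α * g₂)) : ℝ) : ℂ) * Ξ))).cexp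
    -- l-derivative of the frozen-sign function
    have habs : HasDerivAt (fun x : ℝ => |x| ^ α) (α * |l| ^ (α - 2) * l) l :=
      hasDerivAt_abs_rpow l hα1
    have hKl : HasDerivAt (fun x : ℝ =>
          ((b ^ α * |x| ^ α / (ε ^ ((1 - γ) * α - 1) * (-α * g₂)) : ℝ) : ℂ))
        ((b ^ α * (α * |l| ^ (α - 2) * l) / (ε ^ ((1 - γ) * α - 1) * (-α * g₂)) : ℝ) : ℂ) l :=
      (((habs.const_mul (b ^ α)).div_const _)).ofReal_comp
    have hcast : HasDerivAt (fun x : ℝ => (x : ℂ)) 1 l := Complex.ofRealCLM.hasDerivAt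
    have hB : HasDerivAt (fun x : ℝ => Complex.exp (Complex.I * (x : ℂ) * (y₀ : ℂ) * (Real.exp (g₂ * t / ε) : ℂ)
        - Complex.I * (x : ℂ) * ((ε ^ γ * (g₁ / g₂) : ℝ) : ℂ) * (1 - (Real.exp (g₂ * t / ε) : ℂ))
        - ((b ^ α * |x| ^ α / (ε ^ ((1 - γ) * α - 1) * (-α * g₂)) : ℝ) : ℂ)
            * Ξ * (1 - (Real.exp (α * g₂ * t / ε) : ℂ))))
        ((Complex.exp (Complex.I * (l : ℂ) * (y₀ : ℂ) * (Real.exp (g₂ * t / ε) : ℂ)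
        - Complex.I * (l : ℂ) * ((ε ^ γ * (g₁ / g₂) : ℝ) : ℂ) * (1 - (Real.exp (g₂ * t / ε) : ℂ))
        - ((b ^ α * |l| ^ α / (ε ^ ((1 - γ) * α - 1) * (-α * g₂)) : ℝ) : ℂ)
            * Ξ * (1 - (Real.exp (α * g₂ * t / ε) : ℂ)))) *
          (Complex.I * 1 * (y₀ : ℂ) * (Real.exp (g₂ * t / ε) : ℂ)
          - Complex.I * 1 * ((ε ^ γ * (g₁ / g₂) : ℝ) : ℂ) * (1 - (Real.exp (g₂ * t / ε) : ℂ))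
          - ((b ^ α * (α * |l| ^ (α - 2) * l) / (ε ^ ((1 - γ) * α - 1) * (-α * g₂)) : ℝ) : ℂ)
              * Ξ * (1 - (Real.exp (α * g₂ * t / ε) : ℂ)))) l := by
      exact (((((hcast.const_mul Complex.I).mul_const (y₀ : ℂ)).mul_const _).sub
        ((((hcast.const_mul Complex.I).mul_const _).mul_const _))).sub
        ((hKl.mul_const Ξ).mul_const _)).cexp
    -- psi agrees with the frozen-sign function near l
    have hev : (fun l' => psi g₁ g₂ b y₀ ε γ α β l' t) =ᶠ[nhds l]
        (fun x : ℝ => Complex.exp (Complex.I * (x : ℂ) * (y₀ : ℂ) * (Real.exp (g₂ * t / ε) : ℂ)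
        - Complex.I * (x : ℂ) * ((ε ^ γ * (g₁ / g₂) : ℝ) : ℂ) * (1 - (Real.exp (g₂ * t / ε) : ℂ))
        - ((b ^ α * |x| ^ α / (ε ^ ((1 - γ) * α - 1) * (-α * g₂)) : ℝ) : ℂ)
            * Ξ * (1 - (Real.exp (α * g₂ * t / ε) : ℂ)))) := by
      have hsign : ∀ᶠ l' in nhds l, Real.sign l' = Real.sign l := by
        rcases lt_or_gt_of_ne hl with h | h
        · filter_upwards [eventually_lt_nhds h] with x hx
          rw [Real.sign_of_neg hx, Real.sign_of_neg h]
        · filter_upwards [eventually_gt_nhds h] with x hx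
          rw [Real.sign_of_pos hx, Real.sign_of_pos h]
      filter_upwards [hsign] with x hx
      simp only [psi, hΞ, Xi, hx]
    rw [hev.deriv_eq, hB.deriv]
    simp only [psi]
    simp only [Pi.sub_apply] at hψt
    rw [hψt.deriv]
    set P : ℂ := Complex.exp (Complex.I * (l : ℂ) * (y₀ : ℂ) * (Real.exp (g₂ * t / ε) : ℂ)
        - Complex.I * (l : ℂ) * ((ε ^ γ * (g₁ / g₂) : ℝ) : ℂ) * (1 - (Real.exp (g₂ * t / ε) : ℂ))
        - ((b ^ α * |l| ^ α / (ε ^ ((1 - γ) * α - 1) * (-α * g₂)) : ℝ) : ℂ)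
            * Ξ * (1 - (Real.exp (α * g₂ * t / ε) : ℂ))) with hP
    -- key real identities
    have key1 : (ε:ℝ) ^ γ = ε ^ (γ - 1) * ε := by
      rw [Real.rpow_sub hε, Real.rpow_one]; field_simp
    have key2 : (ε:ℝ) ^ (-(1 - γ) * α) = (ε ^ ((1 - γ) * α - 1) * ε)⁻¹ := by
      rw [Real.rpow_sub hε, Real.rpow_one, neg_mul, Real.rpow_neg hε.le]
      field_simp
    have hsq : |l| ^ (2:ℝ) = l * l := by
      rw [show (2:ℝ) = ((2:ℕ):ℝ) from by norm_num, Real.rpow_natCast, pow_two,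
        abs_mul_abs_self]
    have key3 : |l| ^ α = |l| ^ (α - 2) * (l * l) := by
      rw [← hsq, ← Real.rpow_add hlabs, show α - 2 + 2 = α from by ring]
    have hεC : (ε:ℂ) ≠ 0 := by exact_mod_cast hεne
    have hg₂C : (g₂:ℂ) ≠ 0 := by exact_mod_cast hg₂ne
    have hαC : (α:ℂ) ≠ 0 := by exact_mod_cast hαne
    rw [key1, key2, key3]
    push_cast
    exact alg_aux _ _ _ _ _ _ _ _ _ _ _ _ _ _ _ hεC hg₂C hαC
  · intro l
    simp [psi]
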